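/- If a squarefree positive integer α is congruent, then the equation α·y² = x³ - x has infinitely many rational solutions (x, y). -/

import Mathlib

open padicValRat

-- odd square mod 8
lemma odd_sq_mod8 {a : ℤ} (h : a % 2 = 1) : a ^ 2 % 8 = 1 := by
  obtain ⟨k, rfl⟩ : ∃ k, a = 2 * k + 1 := ⟨a / 2, by omega⟩
  obtain ⟨m, hm⟩ : Even (k * (k + 1)) := Int.even_mul_succ_self k
  have : (2 * k + 1) ^ 2 = 4 * (k * (k + 1)) + 1 := by ring
  omega

lemma padicValInt_eq_one {m : ℤ} (h : m % 8 = 2) : padicValInt 2 m = 1 := by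
  obtain ⟨k, rfl⟩ : ∃ k, m = k * 2 := ⟨m / 2, by omega⟩
  have hk : ¬ (2:ℤ) ∣ k := by omega
  have h2 : padicValInt 2 (k * ((2:ℕ):ℤ)) = padicValInt 2 k + 1 :=
    padicValInt_mul_eq_succ k (by omega)
  norm_num at h2
  rw [h2, padicValInt.eq_zero_of_not_dvd (by exact_mod_cast hk)]

lemma padicValInt_ge_three {m : ℤ} (h0 : m ≠ 0) (h : (8:ℤ) ∣ m) : 3 ≤ padicValInt 2 m := by
  have := (padicValInt_dvd_iff (p := 2) 3 m).mp (by norm_num; exact h)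
  tauto

/-- if the 2-adic valuation of a nonzero rational is 0, its num and den are odd -/
lemma num_den_odd {r : ℚ} (hr : r ≠ 0) (h : padicValRat 2 r = 0) :
    r.num % 2 = 1 ∧ (r.den : ℤ) % 2 = 1 := by
  have hnum : r.num ≠ 0 := Rat.num_ne_zero.mpr hr
  have hden : r.den ≠ 0 := r.den_nz
  have hcop : Nat.Coprime r.num.natAbs r.den := r.reduced
  rw [padicValRat_def] at h
  by_cases h2 : (2:ℤ) ∣ r.num
  · -- then den odd, so padicValNat = 0, but padicValInt ≥ 1, contradiction
    have hd2 : ¬ (2 ∣ r.den) := by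
      intro hdd
      have : (2:ℕ) ∣ Nat.gcd r.num.natAbs r.den :=
        Nat.dvd_gcd (by simpa using Int.natAbs_dvd_natAbs.mpr h2) hdd
      rw [hcop] at this; omega
    have hv1 : 1 ≤ padicValInt 2 r.num := by
      rw [padicValInt]
      exact one_le_padicValNat_of_dvd (Int.natAbs_ne_zero.mpr hnum)
        (by simpa using Int.natAbs_dvd_natAbs.mpr h2)
    rw [padicValNat.eq_zero_of_not_dvd hd2] at h
    omega
  · have hnodd : r.num % 2 = 1 := by omega
    have hvz : padicValInt 2 r.num = 0 := padicValInt.eq_zero_of_not_dvd h2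
    rw [hvz] at h
    have : padicValNat 2 r.den = 0 := by omega
    have hd2 : ¬ (2 ∣ r.den) := by
      intro hdd
      have := one_le_padicValNat_of_dvd hden hdd
      omega
    refine ⟨hnodd, by omega⟩

lemma unit_core {r s : ℚ} (hr0 : r ≠ 0) (hs0 : s ≠ 0)
    (hr : padicValRat 2 r = 0) (hs : padicValRat 2 s = 0) :
    padicValRat 2 (r ^ 2 + s ^ 2) = 1 ∧
      (r ^ 2 - s ^ 2 ≠ 0 → 3 ≤ padicValRat 2 (r ^ 2 - s ^ 2)) := by
  obtain ⟨ha, hb⟩ := num_den_odd hr0 hr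
  obtain ⟨hc, hd⟩ := num_den_odd hs0 hs
  set a := r.num with ha'
  set c := s.num with hc'
  set b := (r.den : ℤ) with hb'
  set d := (s.den : ℤ) with hd'
  have hbz : b ≠ 0 := by positivity
  have hdz : d ≠ 0 := by positivity
  have hrd : r = (a : ℚ) / (b : ℚ) := by exact_mod_cast (Rat.num_div_den r).symm
  have hsd : s = (c : ℚ) / (d : ℚ) := by exact_mod_cast (Rat.num_div_den s).symm
  have had : (a * d) % 2 = 1 := by rw [Int.mul_emod, ha, hd]; rfl
  have hcb : (c * b) % 2 = 1 := by rw [Int.mul_emod, hc, hb]; rfl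
  have h1 := odd_sq_mod8 had
  have h2 := odd_sq_mod8 hcb
  have hbd : ((b * d) ^ 2) % 2 = 1 := by
    have : (b * d) % 2 = 1 := by rw [Int.mul_emod, hb, hd]; rfl
    have := odd_sq_mod8 this; omega
  have hFv : padicValRat 2 (((b * d) ^ 2 : ℤ) : ℚ) = 0 := by
    rw [padicValRat.of_int, padicValInt.eq_zero_of_not_dvd (by omega)]
    simp
  have hFz : (((b * d) ^ 2 : ℤ) : ℚ) ≠ 0 := by
    have : (b * d) ^ 2 ≠ 0 := by positivity
    exact_mod_cast this
  constructor
  · have hE : (a * d) ^ 2 + (c * b) ^ 2 ≠ 0 := by omega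
    have req : r ^ 2 + s ^ 2 = (((a * d) ^ 2 + (c * b) ^ 2 : ℤ) : ℚ) / (((b * d) ^ 2 : ℤ) : ℚ) := by
      rw [hrd, hsd]; push_cast; field_simp
    rw [req, padicValRat.div (by exact_mod_cast hE) hFz, hFv, padicValRat.of_int,
      padicValInt_eq_one (by omega)]
    simp
  · intro hne
    have hE8 : (8:ℤ) ∣ ((a * d) ^ 2 - (c * b) ^ 2) := by omega
    have req : r ^ 2 - s ^ 2 = (((a * d) ^ 2 - (c * b) ^ 2 : ℤ) : ℚ) / (((b * d) ^ 2 : ℤ) : ℚ) := by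
      rw [hrd, hsd]; push_cast; field_simp
    have hE : ((a * d) ^ 2 - (c * b) ^ 2 : ℤ) ≠ 0 := by
      intro h0
      rw [req] at hne
      apply hne
      rw [h0]; simp
    rw [req, padicValRat.div (by exact_mod_cast hE) hFz, hFv, padicValRat.of_int]
    have := padicValInt_ge_three hE hE8
    omega

lemma val_two_rat : padicValRat 2 (2 : ℚ) = 1 := by
  have := padicValRat.self (p := 2) (by norm_num)
  simpa using this

lemma key_vals {N x : ℚ} (hN0 : N ≠ 0) (hNv : padicValRat 2 N = 0 ∨ padicValRat 2 N = 1)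
    (hx : x ≠ 0) (hsub : x ^ 2 - N ^ 2 ≠ 0) :
    2 * padicValRat 2 (x ^ 2 + N ^ 2) ≤ padicValRat 2 x + padicValRat 2 (x ^ 2 - N ^ 2) ∧
    (padicValRat 2 x < 0 →
      padicValRat 2 (x ^ 2 + N ^ 2) = 2 * padicValRat 2 x ∧
      padicValRat 2 (x ^ 2 - N ^ 2) = 2 * padicValRat 2 x) := by
  have hx2 : x ^ 2 ≠ 0 := pow_ne_zero _ hx
  have hN2 : N ^ 2 ≠ 0 := pow_ne_zero _ hN0
  have hNneg2 : -(N ^ 2) ≠ 0 := neg_ne_zero.mpr hN2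
  have hadd : x ^ 2 + N ^ 2 ≠ 0 := by positivity
  have vx2 : padicValRat 2 (x ^ 2) = 2 * padicValRat 2 x := by
    rw [padicValRat.pow x]; push_cast; ring
  have vN2 : padicValRat 2 (N ^ 2) = 2 * padicValRat 2 N := by
    rw [padicValRat.pow N]; push_cast; ring
  have vNneg2 : padicValRat 2 (-(N ^ 2)) = 2 * padicValRat 2 N := by
    rw [padicValRat.neg]; exact vN2
  have hsubeq : x ^ 2 - N ^ 2 = x ^ 2 + -(N ^ 2) := by ring
  rcases lt_trichotomy (padicValRat 2 x) (padicValRat 2 N) with h | h | h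
  · -- v x < v N, so v x ≤ 0
    have hne : padicValRat 2 (x ^ 2) ≠ padicValRat 2 (N ^ 2) := by omega
    have hA : padicValRat 2 (x ^ 2 + N ^ 2) = 2 * padicValRat 2 x := by
      rw [padicValRat.add_eq_min hadd hx2 hN2 hne, vx2, vN2, min_eq_left (by omega)]
    have hB : padicValRat 2 (x ^ 2 - N ^ 2) = 2 * padicValRat 2 x := by
      rw [hsubeq, padicValRat.add_eq_min (hsubeq ▸ hsub) hx2 hNneg2 (by omega), vx2, vNneg2,
        min_eq_left (by omega)]
    exact ⟨by omega, fun _ => ⟨hA, hB⟩⟩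
  · -- v x = v N ∈ {0, 1}
    have hnonneg : (0:ℤ) ≤ padicValRat 2 x := by omega
    refine ⟨?_, fun hu => absurd hu (by omega)⟩
    rcases hNv with hN1 | hN1
    · -- both units
      obtain ⟨hA, hB⟩ := unit_core hx hN0 (by omega) hN1
      have := hB hsub
      omega
    · -- both of valuation 1
      have h2 : (2:ℚ) ≠ 0 := by norm_num
      have hr0 : x / 2 ≠ 0 := div_ne_zero hx h2
      have hs0 : N / 2 ≠ 0 := div_ne_zero hN0 h2
      have hr : padicValRat 2 (x / 2) = 0 := by
        rw [padicValRat.div hx h2, val_two_rat]; omega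
      have hs : padicValRat 2 (N / 2) = 0 := by
        rw [padicValRat.div hN0 h2, val_two_rat]; omega
      obtain ⟨hA, hB⟩ := unit_core hr0 hs0 hr hs
      have hsub2 : (x / 2) ^ 2 - (N / 2) ^ 2 ≠ 0 := by
        intro h0; apply hsub
        have : x ^ 2 - N ^ 2 = 4 * ((x / 2) ^ 2 - (N / 2) ^ 2) := by ring
        rw [this, h0, mul_zero]
      have hB' := hB hsub2
      have hfour : padicValRat 2 (4 : ℚ) = 2 := by
        have : (4:ℚ) = 2 * 2 := by norm_num
        rw [this, padicValRat.mul h2 h2, val_two_rat]; norm_num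
      have haddeq : x ^ 2 + N ^ 2 = 4 * ((x / 2) ^ 2 + (N / 2) ^ 2) := by ring
      have hsubeq4 : x ^ 2 - N ^ 2 = 4 * ((x / 2) ^ 2 - (N / 2) ^ 2) := by ring
      have hadd2 : (x / 2) ^ 2 + (N / 2) ^ 2 ≠ 0 := by positivity
      have vA : padicValRat 2 (x ^ 2 + N ^ 2) = 3 := by
        rw [haddeq, padicValRat.mul (by norm_num) hadd2, hfour, hA]; norm_num
      have vB : 5 ≤ padicValRat 2 (x ^ 2 - N ^ 2) := by
        rw [hsubeq4, padicValRat.mul (by norm_num) hsub2, hfour]; omega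
      omega
  · -- v x > v N, v N ∈ {0,1}
    have hne : padicValRat 2 (x ^ 2) ≠ padicValRat 2 (N ^ 2) := by omega
    have hA : padicValRat 2 (x ^ 2 + N ^ 2) = 2 * padicValRat 2 N := by
      rw [padicValRat.add_eq_min hadd hx2 hN2 hne, vx2, vN2, min_eq_right (by omega)]
    have hB : padicValRat 2 (x ^ 2 - N ^ 2) = 2 * padicValRat 2 N := by
      rw [hsubeq, padicValRat.add_eq_min (hsubeq ▸ hsub) hx2 hNneg2 (by omega), vx2, vNneg2,
        min_eq_right (by omega)]
    refine ⟨by omega, fun hu => absurd hu (by omega)⟩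

lemma step_lemma {N x y x' y' : ℚ} (hN0 : N ≠ 0)
    (hNv : padicValRat 2 N = 0 ∨ padicValRat 2 N = 1) (hy : y ≠ 0)
    (hc : y ^ 2 = x ^ 3 - N ^ 2 * x)
    (hx'def : x' = ((x ^ 2 + N ^ 2) / (2 * y)) ^ 2)
    (hy'def : y' = ((3 * x ^ 2 - N ^ 2) / (2 * y)) * (x - x') - y) :
    (y' ^ 2 = x' ^ 3 - N ^ 2 * x') ∧ y' ≠ 0 ∧ padicValRat 2 x' ≤ -2 ∧
      (padicValRat 2 x < 0 → padicValRat 2 x' = padicValRat 2 x - 2) := by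
  have hx : x ≠ 0 := by
    intro h0; apply hy
    have : y ^ 2 = 0 := by rw [hc, h0]; ring
    exact pow_eq_zero_iff (by norm_num) |>.mp this
  have hfac : y ^ 2 = x * (x ^ 2 - N ^ 2) := by linear_combination hc
  have hsub : x ^ 2 - N ^ 2 ≠ 0 := by
    intro h0; apply hy
    have : y ^ 2 = 0 := by rw [hfac, h0]; ring
    exact pow_eq_zero_iff (by norm_num) |>.mp this
  have hnum : x ^ 2 + N ^ 2 ≠ 0 := by positivity
  have h2 : (2:ℚ) ≠ 0 := by norm_num
  have h2y : 2 * y ≠ 0 := mul_ne_zero h2 hy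
  have hx' : x' ≠ 0 := hx'def ▸ pow_ne_zero _ (div_ne_zero hnum h2y)
  -- the duplication identity
  have hcurve : y' ^ 2 = x' ^ 3 - N ^ 2 * x' := by
    rw [hy'def, hx'def]
    field_simp
    linear_combination (64 * (y ^ 6 + y ^ 4 * (x ^ 3 - N ^ 2 * x) + y ^ 2 * (x ^ 3 - N ^ 2 * x) ^ 2 + (x ^ 3 - N ^ 2 * x) ^ 3) - 64 * x * (3 * x ^ 2 - N ^ 2) * (y ^ 4 + y ^ 2 * (x ^ 3 - N ^ 2 * x) + (x ^ 3 - N ^ 2 * x) ^ 2) + (16 * x ^ 2 * (3 * x ^ 2 - N ^ 2) ^ 2 + 16 * (3 * x ^ 2 - N ^ 2) * (x ^ 2 + N ^ 2) ^ 2 + 16 * N ^ 2 * (x ^ 2 + N ^ 2) ^ 2) * (y ^ 2 + (x ^ 3 - N ^ 2 * x)) - 8 * x * (3 * x ^ 2 - N ^ 2) ^ 2 * (x ^ 2 + N ^ 2) ^ 2) * hc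
  -- valuation of x'
  have v2y : padicValRat 2 (2 * y) = 1 + padicValRat 2 y := by
    rw [padicValRat.mul h2 hy, val_two_rat]
  have vx' : padicValRat 2 x' =
      2 * (padicValRat 2 (x ^ 2 + N ^ 2) - (1 + padicValRat 2 y)) := by
    rw [hx'def, padicValRat.pow ((x ^ 2 + N ^ 2) / (2 * y)), padicValRat.div hnum h2y, v2y]
    push_cast; ring
  have vyrel : 2 * padicValRat 2 y = padicValRat 2 x + padicValRat 2 (x ^ 2 - N ^ 2) := by
    have := padicValRat.pow (p := 2) y (k := 2)
    rw [hfac, padicValRat.mul hx hsub] at this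
    push_cast at this; omega
  obtain ⟨hineq, hlow⟩ := key_vals hN0 hNv hx hsub
  have hvx'le : padicValRat 2 x' ≤ -2 := by omega
  refine ⟨hcurve, ?_, hvx'le, ?_⟩
  · -- y' ≠ 0
    intro h0
    have hz : x' * ((x' - N) * (x' + N)) = 0 := by
      have : (0:ℚ) ^ 2 = x' ^ 3 - N ^ 2 * x' := h0 ▸ hcurve
      linear_combination -this
    rcases mul_eq_zero.mp hz with h1 | h1
    · exact hx' h1
    rcases mul_eq_zero.mp h1 with h1 | h1
    · have hxN : x' = N := by linarith [sub_eq_zero.mp h1]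
      rw [hxN] at hvx'le; omega
    · have hxN : x' = -N := by linarith [add_eq_zero_iff_eq_neg.mp h1]
      rw [hxN, padicValRat.neg] at hvx'le; omega
  · intro hneg
    obtain ⟨hA, hB⟩ := hlow hneg
    omega

/-- Corollary 9: if a squarefree positive integer `α` is congruent, then `α y² = x³ - x` has
infinitely many rational solutions. -/
theorem congruent_infinitely_many_points (α : ℤ) (hsf : Squarefree α) (hpos : 0 < α)
    (h : ∃ a b c : ℚ, a ^ 2 + b ^ 2 = c ^ 2 ∧ a * b = 2 * (α : ℚ)) :
    {p : ℚ × ℚ | (α : ℚ) * p.2 ^ 2 = p.1 ^ 3 - p.1}.Infinite := by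
  set N : ℚ := (α : ℚ) with hNdef
  have hN0 : N ≠ 0 := by
    simp only [hNdef, ne_eq, Int.cast_eq_zero]; omega
  -- valuation of N is 0 or 1 since α is squarefree
  have hNv : padicValRat 2 N = 0 ∨ padicValRat 2 N = 1 := by
    have hv : padicValRat 2 N = padicValInt 2 α := padicValRat.of_int
    have hle : padicValInt 2 α ≤ 1 := by
      by_contra hgt
      push_neg at hgt
      have hdvd : (2:ℤ) ^ 2 ∣ α := (padicValInt_dvd_iff 2 α).mpr (Or.inr hgt)
      have : IsUnit (2:ℤ) := hsf 2 (by rw [show (2:ℤ) * 2 = 2 ^ 2 by ring]; exact hdvd)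
      rw [Int.isUnit_iff] at this
      omega
    rw [hv]; omega
  obtain ⟨a, b, c, h1, h2⟩ := h
  have ha : a ≠ 0 := by
    intro h0; rw [h0, zero_mul] at h2
    exact hN0 (by rw [hNdef]; linarith)
  have hc0 : c ≠ 0 := by
    intro h0; rw [h0] at h1
    have : a ^ 2 ≤ 0 := by nlinarith [sq_nonneg b]
    exact ha (by nlinarith [sq_nonneg a])
  have hab2 : a ^ 2 ≠ b ^ 2 := by
    intro heq
    have hq : ((c / a) : ℚ) ^ 2 = 2 := by
      field_simp
      linarith
    have hqR : (((c / a) : ℚ) : ℝ) ^ 2 = 2 := by exact_mod_cast congrArg (fun t : ℚ => (t : ℝ)) hq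
    apply irrational_sqrt_two
    refine ⟨|c / a|, ?_⟩
    rw [Rat.cast_abs, ← Real.sqrt_sq_eq_abs, hqR]
  -- initial point
  set P0 : ℚ × ℚ := ((c / 2) ^ 2, c * (a ^ 2 - b ^ 2) / 8) with hP0
  have hGood0 : P0.2 ≠ 0 ∧ P0.2 ^ 2 = P0.1 ^ 3 - N ^ 2 * P0.1 := by
    constructor
    · simp only [hP0]
      exact div_ne_zero (mul_ne_zero hc0 (sub_ne_zero.mpr hab2)) (by norm_num)
    · simp only [hP0]
      linear_combination (c ^ 2 * (a ^ 2 + b ^ 2 + c ^ 2) / 64) * h1 +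
        (-(c ^ 2) * (2 * N + a * b) / 16) * h2
  -- the duplication map
  set step : ℚ × ℚ → ℚ × ℚ := fun p =>
    (((p.1 ^ 2 + N ^ 2) / (2 * p.2)) ^ 2,
      ((3 * p.1 ^ 2 - N ^ 2) / (2 * p.2)) * (p.1 - ((p.1 ^ 2 + N ^ 2) / (2 * p.2)) ^ 2) - p.2)
    with hstepdef
  have hstep : ∀ p : ℚ × ℚ, p.2 ≠ 0 → p.2 ^ 2 = p.1 ^ 3 - N ^ 2 * p.1 →
      ((step p).2 ≠ 0 ∧ (step p).2 ^ 2 = (step p).1 ^ 3 - N ^ 2 * (step p).1) ∧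
        padicValRat 2 (step p).1 ≤ -2 ∧
        (padicValRat 2 p.1 < 0 → padicValRat 2 (step p).1 = padicValRat 2 p.1 - 2) := by
    intro p hp1 hp2
    obtain ⟨hcur, hy', hv1, hv2⟩ := step_lemma hN0 hNv hp1 hp2 rfl rfl
    exact ⟨⟨hy', hcur⟩, hv1, hv2⟩
  -- iterates
  have hiter : ∀ k : ℕ,
      ((step^[k + 1] P0).2 ≠ 0 ∧
        (step^[k + 1] P0).2 ^ 2 = (step^[k + 1] P0).1 ^ 3 - N ^ 2 * (step^[k + 1] P0).1) ∧
      padicValRat 2 (step^[k + 1] P0).1 = padicValRat 2 (step P0).1 - 2 * k ∧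
      padicValRat 2 (step^[k + 1] P0).1 ≤ -2 := by
    intro k
    induction k with
    | zero =>
      obtain ⟨hg, hv, _⟩ := hstep P0 hGood0.1 hGood0.2
      simpa using ⟨hg, hv⟩
    | succ k ih =>
      obtain ⟨⟨ihy, ihc⟩, ihv, ihle⟩ := ih
      have hs := hstep _ ihy ihc
      rw [Function.iterate_succ_apply']
      refine ⟨hs.1, ?_, ?_⟩
      · rw [hs.2.2 (by omega), ihv]; push_cast; ring
      · exact hs.2.1
  -- the injection into the solution set
  set F : ℕ → ℚ × ℚ := fun k => ((step^[k + 1] P0).1 / N, (step^[k + 1] P0).2 / N ^ 2)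
    with hFdef
  apply Set.infinite_of_injective_forall_mem (f := F)
  · intro k1 k2 hEq
    have hx : (step^[k1 + 1] P0).1 / N = (step^[k2 + 1] P0).1 / N := congrArg Prod.fst hEq
    have hxx : (step^[k1 + 1] P0).1 = (step^[k2 + 1] P0).1 := by
      field_simp at hx; exact hx
    have hv1 := (hiter k1).2.1
    have hv2 := (hiter k2).2.1
    rw [hxx, hv2] at hv1
    omega
  · intro k
    obtain ⟨⟨hy, hcur⟩, _, _⟩ := hiter k
    show N * ((step^[k + 1] P0).2 / N ^ 2) ^ 2 =
      ((step^[k + 1] P0).1 / N) ^ 3 - (step^[k + 1] P0).1 / N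
    set X := (step^[k + 1] P0).1 with hX
    set Y := (step^[k + 1] P0).2 with hY
    field_simp
    linear_combination hcur
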